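/- For every connection form ω there exists a unique pair (ωᴳ, G) such that ω = ωᴳ + G, where ωᴳ is a connection form adapted to v and G : V → End(V) is linear with G(u) η-skew and h ∘ G(u) ∘ h = 0 for every u ∈ V. Moreover, G is given explicitly by G(u)x = η(Dωv(u), x)·v − η(v, x)·Dωv(u), where Dωv(u) = dv(u) + ω(u)v. -/
import Mathlib

set_option maxRecDepth 8000


/- Minkowski space V = ℝ⁴ with bilinear form η. -/
abbrev V4 := Fin 4 → ℝ

def eta (x y : V4) : ℝ := -(x 0 * y 0) + x 1 * y 1 + x 2 * y 2 + x 3 * y 3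

/-- `f : V → V` is linear. -/
def IsLin (f : V4 → V4) : Prop :=
  (∀ x y, f (x + y) = f x + f y) ∧ ∀ (c : ℝ) (x : V4), f (c • x) = c • f x

/-- `f` is η-skew: η(f x, y) = −η(x, f y). -/
def IsSkew (f : V4 → V4) : Prop := ∀ x y, eta (f x) y = - eta x (f y)

/-- A connection form: a linear map `ω : V → End V` with each `ω u` η-skew. -/
def ConnForm (ω : V4 → V4 → V4) : Prop :=
  (∀ u u', ω (u + u') = ω u + ω u') ∧ (∀ (c : ℝ) (u : V4), ω (c • u) = c • ω u) ∧
  (∀ u, IsLin (ω u)) ∧ (∀ u, IsSkew (ω u))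

/-- Projection onto the η-orthogonal complement of `v`:  h(x) = x + η(v,x)·v. -/
def proj (v : V4) (x : V4) : V4 := x + eta v x • v

/-- The pair `(ωᴳ, G)` decomposes `ω`: `ωᴳ` is a connection form adapted to `v`
(i.e. `Dᴳv = dv + ωᴳ(·)v = 0`), `G : V → End V` is linear, each `G u` is η-skew with
`h ∘ G u ∘ h = 0`, and `ω = ωᴳ + G`. -/
def GoodPair (v : V4) (dv : V4 → V4) (ω : V4 → V4 → V4)
    (p : (V4 → V4 → V4) × (V4 → V4 → V4)) : Prop :=
  ConnForm p.1 ∧ (∀ u, dv u + p.1 u v = 0) ∧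
  (∀ u u', p.2 (u + u') = p.2 u + p.2 u') ∧
  (∀ (c : ℝ) (u : V4), p.2 (c • u) = c • p.2 u) ∧
  (∀ u, IsLin (p.2 u)) ∧ (∀ u, IsSkew (p.2 u)) ∧
  (∀ u x, proj v (p.2 u (proj v x)) = 0) ∧
  (∀ u x, ω u x = p.1 u x + p.2 u x)

/- Auxiliary lemmas about η. -/
lemma eta_symm (x y : V4) : eta x y = eta y x := by unfold eta; ring
lemma eta_add_right (x y z : V4) : eta x (y + z) = eta x y + eta x z := by
  simp [eta]; ring
lemma eta_smul_right (c : ℝ) (x y : V4) : eta x (c • y) = c * eta x y := by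
  simp [eta]; ring
lemma eta_add_left (x y z : V4) : eta (x + y) z = eta x z + eta y z := by
  simp [eta]; ring
lemma eta_smul_left (c : ℝ) (x y : V4) : eta (c • x) y = c * eta x y := by
  simp [eta]; ring
lemma eta_sub_left (x y z : V4) : eta (x - y) z = eta x z - eta y z := by
  simp [eta]; ring
lemma eta_sub_right (x y z : V4) : eta x (y - z) = eta x y - eta x z := by
  simp [eta]; ring

lemma eta_omega_vv (v : V4) (ω : V4 → V4 → V4) (hω : ConnForm ω) (u : V4) :
    eta v (ω u v) = 0 := by
  have h1 := hω.2.2.2 u v v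
  have h2 := eta_symm (ω u v) v
  linarith

/-- The key uniqueness computation: any good pair has the explicit `G`. -/
lemma goodpair_G (v : V4) (hv : eta v v = -1)
    (dv : V4 → V4) (hdvorth : ∀ u, eta v (dv u) = 0)
    (ω : V4 → V4 → V4) (hω : ConnForm ω)
    (p : (V4 → V4 → V4) × (V4 → V4 → V4)) (hp : GoodPair v dv ω p) :
    ∀ u x, p.2 u x = eta (dv u + ω u v) x • v - eta v x • (dv u + ω u v) := by
  obtain ⟨hconn, hadapt, _, _, hlin, hskew, hproj, hdec⟩ := hp
  intro u x
  set D : V4 := dv u + ω u v with hD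
  have hGv : p.2 u v = D := by
    have h1 := hdec u v
    have h2 : p.1 u v = -dv u := eq_neg_of_add_eq_zero_right (hadapt u)
    rw [h2] at h1
    rw [hD, h1]; abel
  have hetaDv : eta D v = 0 := by
    have h1 : eta (dv u) v = 0 := by rw [eta_symm]; exact hdvorth u
    have h2 : eta (ω u v) v = 0 := by rw [eta_symm]; exact eta_omega_vv v ω hω u
    rw [hD, eta_add_left, h1, h2]; ring
  set w : V4 := p.2 u (proj v x) with hw
  have hw2 : w = (-eta v w) • v := by
    have h0 : w + eta v w • v = 0 := hproj u x
    have : w = -(eta v w • v) := eq_neg_of_add_eq_zero_left h0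
    rw [neg_smul]; exact this
  have hvw : eta v w = - eta D (proj v x) := by
    have h1 := hskew u v (proj v x)
    rw [hGv] at h1
    linarith [h1]
  have hDproj : eta D (proj v x) = eta D x := by
    unfold proj
    rw [eta_add_right, eta_smul_right, hetaDv]; ring
  have hwval : w = eta D x • v := by
    rw [hw2, hvw, hDproj, neg_neg]
  have hxdec : x = proj v x + (-eta v x) • v := by
    unfold proj; rw [neg_smul]; abel
  calc p.2 u x = p.2 u (proj v x + (-eta v x) • v) := by rw [← hxdec]
    _ = w + (-eta v x) • p.2 u v := by rw [(hlin u).1, (hlin u).2, ← hw]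
    _ = eta D x • v - eta v x • D := by rw [hwval, hGv, neg_smul]; abel

/-- Every connection form `ω` decomposes uniquely as
`ω = ωᴳ + G` with `ωᴳ` adapted to `v` and `G` a 1-form with η-skew values whose spatial
part vanishes; moreover `G(u)x = η(Dωv(u),x)·v − η(v,x)·Dωv(u)` where `Dωv(u) = dv(u) + ω(u)v`. -/
theorem statement0 (v : V4) (hv : eta v v = -1)
    (dv : V4 → V4) (hdvlin : IsLin dv) (hdvorth : ∀ u, eta v (dv u) = 0)
    (ω : V4 → V4 → V4) (hω : ConnForm ω) :
    (∃! p : (V4 → V4 → V4) × (V4 → V4 → V4), GoodPair v dv ω p) ∧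
    (∀ p : (V4 → V4 → V4) × (V4 → V4 → V4), GoodPair v dv ω p →
      ∀ u x, p.2 u x = eta (dv u + ω u v) x • v - eta v x • (dv u + ω u v)) := by
  -- abbreviations
  set Dv : V4 → V4 := fun u => dv u + ω u v with hDv
  set G : V4 → V4 → V4 := fun u x => eta (Dv u) x • v - eta v x • Dv u with hG
  set ωG : V4 → V4 → V4 := fun u x => ω u x - G u x with hωG
  have hDadd : ∀ u u', Dv (u + u') = Dv u + Dv u' := by
    intro u u'
    simp only [hDv]
    rw [hdvlin.1, hω.1]
    simp only [Pi.add_apply]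
    abel
  have hDsmul : ∀ (c : ℝ) u, Dv (c • u) = c • Dv u := by
    intro c u
    simp only [hDv]
    rw [hdvlin.2, hω.2.1]
    simp only [Pi.smul_apply, smul_add]
  have hetaDv : ∀ u, eta v (Dv u) = 0 := by
    intro u
    simp only [hDv]
    rw [eta_add_right, hdvorth u, eta_omega_vv v ω hω u]; ring
  have hGadd : ∀ u u', G (u + u') = G u + G u' := by
    intro u u'
    funext x
    simp only [hG, Pi.add_apply, hDadd, eta_add_left, add_smul, smul_add]
    abel
  have hGsmul : ∀ (c : ℝ) u, G (c • u) = c • G u := by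
    intro c u
    funext x
    simp only [hG, Pi.smul_apply, hDsmul, eta_smul_left]
    module
  have hGlin : ∀ u, IsLin (G u) := by
    intro u
    constructor
    · intro x y
      simp only [hG, eta_add_right, add_smul]
      abel
    · intro c x
      simp only [hG, eta_smul_right]
      module
  have hGskew : ∀ u, IsSkew (G u) := by
    intro u x y
    simp only [hG]
    rw [eta_sub_left, eta_smul_left, eta_smul_left, eta_sub_right, eta_smul_right,
      eta_smul_right, eta_symm x v, eta_symm x (Dv u)]
    ring
  have hGproj : ∀ u x, proj v (G u (proj v x)) = 0 := by
    intro u x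
    have h1 : eta v (proj v x) = 0 := by
      unfold proj
      rw [eta_add_right, eta_smul_right, hv]; ring
    have h2 : G u (proj v x) = eta (Dv u) (proj v x) • v := by
      simp only [hG, h1, zero_smul, sub_zero]
    rw [h2]
    unfold proj
    rw [eta_smul_right, hv]
    rw [mul_neg_one, neg_smul]
    abel
  have hGv : ∀ u, G u v = Dv u := by
    intro u
    have h1 : eta (Dv u) v = 0 := by rw [eta_symm]; exact hetaDv u
    simp only [hG, h1, zero_smul, hv, neg_smul, one_smul, zero_sub, neg_neg]
  have hq : GoodPair v dv ω (ωG, G) := by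
    refine ⟨⟨?_, ?_, ?_, ?_⟩, ?_, hGadd, hGsmul, hGlin, hGskew, hGproj, ?_⟩
    · intro u u'
      funext x
      simp only [hωG, Pi.add_apply, hω.1, hGadd]
      abel
    · intro c u
      funext x
      simp only [hωG, Pi.smul_apply, hω.2.1, hGsmul, smul_sub]
    · intro u
      constructor
      · intro x y
        simp only [hωG, (hω.2.2.1 u).1, (hGlin u).1]
        abel
      · intro c x
        simp only [hωG, (hω.2.2.1 u).2, (hGlin u).2, smul_sub]
    · intro u x y
      simp only [hωG]
      rw [eta_sub_left, eta_sub_right, hω.2.2.2 u x y, hGskew u x y]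
      ring
    · intro u
      simp only [hωG]
      rw [hGv u]
      simp only [hDv]
      all_goals abel
    · intro u x
      simp only [hωG]
      all_goals abel
  constructor
  · refine ⟨(ωG, G), hq, ?_⟩
    intro p hp
    have hp2 : p.2 = G := by
      funext u x
      rw [goodpair_G v hv dv hdvorth ω hω p hp u x]
    have hp1 : p.1 = ωG := by
      funext u x
      have h1 := hp.2.2.2.2.2.2.2 u x
      have : p.1 u x = ω u x - p.2 u x := by rw [h1]; abel
      rw [this, hp2]
    exact Prod.ext hp1 hp2
  · intro p hp
    exact goodpair_G v hv dv hdvorth ω hω p hp
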